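/- For the one-group Cooperative-LASSO on ℝ^T with objective ½βᵀCβ + βᵀc + λ(‖(β)₊‖₂ + ‖(−β)₊‖₂), the point β̂ = 0 is optimal if and only if max(‖(−c)₊‖₂, ‖(c)₊‖₂) ≤ λ. -/

import Mathlib

open Matrix BigOperators

private lemma cs_sqrt (T : ℕ) (a b : Fin T → ℝ) (ha : ∀ t, 0 ≤ a t) (hb : ∀ t, 0 ≤ b t) :
    ∑ t, a t * b t ≤ Real.sqrt (∑ t, a t ^ 2) * Real.sqrt (∑ t, b t ^ 2) := by
  have h := Finset.sum_mul_sq_le_sq_mul_sq Finset.univ a b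
  have hs : 0 ≤ ∑ t, a t * b t :=
    Finset.sum_nonneg fun t _ => mul_nonneg (ha t) (hb t)
  have := Real.sqrt_le_sqrt h
  rwa [Real.sqrt_sq hs, Real.sqrt_mul (Finset.sum_nonneg fun t _ => sq_nonneg (a t))] at this

private lemma aux_bound (N Q lam : ℝ) (hQ : 0 ≤ Q) (hlam : 0 < lam) (hN : 0 ≤ N)
    (H : ∀ ε : ℝ, 0 < ε → 0 ≤ ε ^ 2 * Q / 2 - ε * N ^ 2 + lam * (ε * N)) : N ≤ lam := by
  by_contra h
  push_neg at h
  have hNpos : 0 < N := lt_trans hlam h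
  have hP : 0 < N * (N - lam) := mul_pos hNpos (by linarith)
  have hden : 0 < Q + 1 := by linarith
  have hε : 0 < N * (N - lam) / (Q + 1) := div_pos hP hden
  have := H _ hε
  have key : (N * (N - lam) / (Q + 1)) * (Q + 1) = N * (N - lam) := by
    field_simp
  nlinarith [sq_nonneg (N * (N - lam) / (Q + 1)), mul_pos hε hP]

/-- For the one-group Cooperative-LASSO on `ℝ^T` with objective
`½βᵀCβ + βᵀc + λ(‖(β)₊‖₂ + ‖(−β)₊‖₂)`, the point `β̂ = 0` is optimal iff
`max(‖(−c)₊‖₂, ‖(c)₊‖₂) ≤ λ`. -/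
theorem coop_lasso_zero_optimal (T : ℕ)
    (C : Matrix (Fin T) (Fin T) ℝ) (hCsym : C.IsSymm) (hCpsd : C.PosSemidef)
    (c : Fin T → ℝ) (lam : ℝ) (hlam : 0 < lam) :
    (∀ β : Fin T → ℝ,
        (0 : ℝ) ≤
        (1 / 2) * (β ⬝ᵥ (C *ᵥ β)) + β ⬝ᵥ c
          + lam * (Real.sqrt (∑ t, (max (β t) 0) ^ 2)
                   + Real.sqrt (∑ t, (max (-β t) 0) ^ 2))) ↔
    max (Real.sqrt (∑ t, (max (-c t) 0) ^ 2))
        (Real.sqrt (∑ t, (max (c t) 0) ^ 2)) ≤ lam := by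
  set a : Fin T → ℝ := fun t => max (-c t) 0 with ha_def
  set b : Fin T → ℝ := fun t => max (c t) 0 with hb_def
  have ha : ∀ t, 0 ≤ a t := fun t => le_max_right _ _
  have hb : ∀ t, 0 ≤ b t := fun t => le_max_right _ _
  have haSum : 0 ≤ ∑ t, a t ^ 2 := Finset.sum_nonneg fun t _ => sq_nonneg _
  have hbSum : 0 ≤ ∑ t, b t ^ 2 := Finset.sum_nonneg fun t _ => sq_nonneg _
  set Na := Real.sqrt (∑ t, a t ^ 2) with hNa
  set Nb := Real.sqrt (∑ t, b t ^ 2) with hNb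
  have hNa0 : 0 ≤ Na := Real.sqrt_nonneg _
  have hNb0 : 0 ≤ Nb := Real.sqrt_nonneg _
  have hNa2 : Na ^ 2 = ∑ t, a t ^ 2 := Real.sq_sqrt haSum
  have hNb2 : Nb ^ 2 = ∑ t, b t ^ 2 := Real.sq_sqrt hbSum
  constructor
  · intro H
    -- generic claim via aux_bound
    have main : ∀ (v : Fin T → ℝ) (s : ℝ), (∀ t, 0 ≤ v t) → s = 1 ∨ s = -1 →
        (∀ t, (s * v t) * c t = -(v t ^ 2)) →
        Real.sqrt (∑ t, v t ^ 2) ≤ lam := by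
      intro v s hv hs hvc
      have hvSum : 0 ≤ ∑ t, v t ^ 2 := Finset.sum_nonneg fun t _ => sq_nonneg _
      set N := Real.sqrt (∑ t, v t ^ 2) with hN
      have hN2 : N ^ 2 = ∑ t, v t ^ 2 := Real.sq_sqrt hvSum
      refine aux_bound N (v ⬝ᵥ C *ᵥ v) lam ?_ hlam (Real.sqrt_nonneg _) ?_
      · have := hCpsd.dotProduct_mulVec_nonneg v
        simpa using this
      · intro ε hε
        have Hβ := H (fun t => s * (ε * v t))
        have hquad : (fun t => s * (ε * v t)) ⬝ᵥ (C *ᵥ fun t => s * (ε * v t))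
            = ε ^ 2 * (v ⬝ᵥ C *ᵥ v) := by
          have hfun : (fun t => s * (ε * v t)) = (s * ε) • v := by
            funext t; simp [mul_assoc, mul_comm, mul_left_comm]
          rw [hfun, mulVec_smul, smul_dotProduct, dotProduct_smul, smul_eq_mul, smul_eq_mul]
          rcases hs with h | h <;> rw [h] <;> ring
        have hdot : (fun t => s * (ε * v t)) ⬝ᵥ c = -(ε * N ^ 2) := by
          rw [hN2]
          simp only [dotProduct]
          rw [Finset.mul_sum, ← Finset.sum_neg_distrib]
          refine Finset.sum_congr rfl fun t _ => ?_
          linear_combination ε * hvc t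
        have hpen : Real.sqrt (∑ t, (max (s * (ε * v t)) 0) ^ 2)
            + Real.sqrt (∑ t, (max (-(s * (ε * v t))) 0) ^ 2) = ε * N := by
          have hzero : ∀ (w : Fin T → ℝ), (∀ t, w t ≤ 0) →
              Real.sqrt (∑ t, (max (w t) 0) ^ 2) = 0 := by
            intro w hw
            have : ∀ t, max (w t) 0 = 0 := fun t => max_eq_right (hw t)
            simp [this]
          have hpos : ∀ (w : Fin T → ℝ), (∀ t, 0 ≤ w t) →
              Real.sqrt (∑ t, (max (ε * w t) 0) ^ 2) = ε * Real.sqrt (∑ t, w t ^ 2) := by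
            intro w hw
            have h1 : ∀ t, max (ε * w t) 0 = ε * w t :=
              fun t => max_eq_left (mul_nonneg hε.le (hw t))
            simp only [h1, mul_pow]
            rw [← Finset.mul_sum, Real.sqrt_mul (by positivity),
              Real.sqrt_sq hε.le]
          rcases hs with h | h
          · subst h
            simp only [one_mul]
            rw [hpos v hv, hzero (fun t => -(ε * v t))
              (fun t => neg_nonpos.2 (mul_nonneg hε.le (hv t)))]
            simp [hN]
          · subst h
            have e1 : ∀ t, (-1 : ℝ) * (ε * v t) = -(ε * v t) := fun t => by ring
            have e2 : ∀ t, -((-1 : ℝ) * (ε * v t)) = ε * v t := fun t => by ring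
            simp only [e1, e2, neg_neg]
            rw [hpos v hv, hzero (fun t => -(ε * v t))
              (fun t => neg_nonpos.2 (mul_nonneg hε.le (hv t)))]
            simp [hN]
        rw [hquad, hdot, hpen] at Hβ
        linarith
    refine max_le ?_ ?_
    · refine main a 1 ha (Or.inl rfl) fun t => ?_
      simp only [one_mul, ha_def]
      rcases le_total (c t) 0 with h | h
      · rw [max_eq_left (by linarith)]; ring
      · rw [max_eq_right (by linarith)]; ring
    · refine main b (-1) hb (Or.inr rfl) fun t => ?_
      simp only [hb_def]
      rcases le_total (c t) 0 with h | h
      · rw [max_eq_right h]; ring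
      · rw [max_eq_left h]; ring
  · intro hmax β
    have hNaLam : Na ≤ lam := le_trans (le_max_left _ _) hmax
    have hNbLam : Nb ≤ lam := le_trans (le_max_right _ _) hmax
    set p : Fin T → ℝ := fun t => max (β t) 0 with hp
    set m : Fin T → ℝ := fun t => max (-β t) 0 with hm
    have hp0 : ∀ t, 0 ≤ p t := fun t => le_max_right _ _
    have hm0 : ∀ t, 0 ≤ m t := fun t => le_max_right _ _
    have hSp0 : 0 ≤ Real.sqrt (∑ t, p t ^ 2) := Real.sqrt_nonneg _
    have hSm0 : 0 ≤ Real.sqrt (∑ t, m t ^ 2) := Real.sqrt_nonneg _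
    have hquad : 0 ≤ β ⬝ᵥ C *ᵥ β := by simpa using hCpsd.dotProduct_mulVec_nonneg β
    have hpt : ∀ t, -(p t * a t) - m t * b t ≤ β t * c t := by
      intro t
      simp only [hp, hm, ha_def, hb_def]
      rcases le_total (β t) 0 with h1 | h1 <;> rcases le_total (c t) 0 with h2 | h2
      · rw [max_eq_right h1, max_eq_left (by linarith : (0:ℝ) ≤ -β t),
          max_eq_right h2]
        nlinarith
      · rw [max_eq_right h1, max_eq_left (by linarith : (0:ℝ) ≤ -β t),
          max_eq_left h2, max_eq_right (by linarith : -c t ≤ 0)]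
        nlinarith
      · rw [max_eq_left h1, max_eq_right (by linarith : -β t ≤ 0),
          max_eq_left (by linarith : (0:ℝ) ≤ -c t)]
        nlinarith
      · rw [max_eq_left h1, max_eq_right (by linarith : -β t ≤ 0),
          max_eq_right (by linarith : -c t ≤ 0), max_eq_left h2]
        nlinarith
    have hsum : -(∑ t, p t * a t) - ∑ t, m t * b t ≤ β ⬝ᵥ c := by
      simp only [dotProduct]
      calc -(∑ t, p t * a t) - ∑ t, m t * b t
          = ∑ t, (-(p t * a t) - m t * b t) := by
            rw [Finset.sum_sub_distrib, Finset.sum_neg_distrib]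
        _ ≤ ∑ t, β t * c t := Finset.sum_le_sum fun t _ => hpt t
    have hcs1 : ∑ t, p t * a t ≤ Real.sqrt (∑ t, p t ^ 2) * Na :=
      cs_sqrt T p a hp0 ha
    have hcs2 : ∑ t, m t * b t ≤ Real.sqrt (∑ t, m t ^ 2) * Nb :=
      cs_sqrt T m b hm0 hb
    have h1 : Real.sqrt (∑ t, p t ^ 2) * Na ≤ lam * Real.sqrt (∑ t, p t ^ 2) := by
      rw [mul_comm]
      exact mul_le_mul_of_nonneg_right hNaLam hSp0
    have h2 : Real.sqrt (∑ t, m t ^ 2) * Nb ≤ lam * Real.sqrt (∑ t, m t ^ 2) := by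
      rw [mul_comm]
      exact mul_le_mul_of_nonneg_right hNbLam hSm0
    have : -(lam * (Real.sqrt (∑ t, p t ^ 2) + Real.sqrt (∑ t, m t ^ 2))) ≤ β ⬝ᵥ c := by
      calc -(lam * (Real.sqrt (∑ t, p t ^ 2) + Real.sqrt (∑ t, m t ^ 2)))
          ≤ -(∑ t, p t * a t) - ∑ t, m t * b t := by nlinarith
        _ ≤ β ⬝ᵥ c := hsum
    simp only [hp, hm] at this
    linarith
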